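/- Let p be a prime and f = a_0 + a_1 x + ... + a_n x^n ∈ ℤ[x] a primitive polynomial such that there exists an index j with 1 ≤ j ≤ n for which (i) p ∤ a_j, (ii) v_p(a_0) ≤ v_p(a_i) for each i = 1, ..., j-1, and (iii) gcd(v_p(a_0), j) = 1. Let d = |a_0| / p^{v_p(a_0)}. If either j = n, or every complex zero θ of f satisfies |θ| > d, then f is irreducible in ℤ[x]. -/

import Mathlib

open Polynomial

namespace Cor3
variable (p m j : ℕ)

noncomputable def V (z : ℤ) : ℕ∞ := emultiplicity (p : ℤ) z

noncomputable def Wt (u : Polynomial ℤ) (i : ℕ) : ℕ∞ :=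
  (j : ℕ∞) * V p (u.coeff i) + (m : ℕ∞) * i

lemma V_eq_padic (hp : p.Prime) {z : ℤ} (hz : z ≠ 0) :
    V p z = (padicValInt p z : ℕ∞) := by
  haveI : Fact p.Prime := ⟨hp⟩
  rw [V, emultiplicity_eq_coe]
  exact ⟨padicValInt_dvd z, by rw [padicValInt_dvd_iff]; simp [hz]⟩

lemma V_zero : V p 0 = ⊤ := emultiplicity_zero _

lemma V_mul (hp : p.Prime) (x y : ℤ) : V p (x * y) = V p x + V p y :=
  emultiplicity_mul (Nat.prime_iff_prime_int.mp hp)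

lemma Wt_eq_top (hj : j ≠ 0) {u : Polynomial ℤ} {i : ℕ} (h : u.coeff i = 0) :
    Wt p m j u i = ⊤ := by
  rw [Wt, h, V_zero, ENat.mul_top (by exact_mod_cast hj), top_add]

def wtn (u : Polynomial ℤ) (i : ℕ) : ℕ := j * padicValInt p (u.coeff i) + m * i

lemma Wt_eq_wtn (hp : p.Prime) {u : Polynomial ℤ} {i : ℕ} (h : u.coeff i ≠ 0) :
    Wt p m j u i = (wtn p m j u i : ℕ∞) := by
  rw [Wt, V_eq_padic p hp h, wtn]; push_cast; ring
lemma exists_AB (hp : p.Prime) (hj : j ≠ 0) (u : Polynomial ℤ) (hu : u ≠ 0) :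
    ∃ w A B : ℕ, u.coeff A ≠ 0 ∧ u.coeff B ≠ 0 ∧
      Wt p m j u A = (w : ℕ∞) ∧ Wt p m j u B = (w : ℕ∞) ∧
      (∀ i, (w : ℕ∞) ≤ Wt p m j u i) ∧
      (∀ i, A < i → (w : ℕ∞) < Wt p m j u i) ∧
      (∀ i, i < B → (w : ℕ∞) < Wt p m j u i) := by
  classical
  have hsupp : u.support.Nonempty := Polynomial.nonempty_support_iff.mpr hu
  set T := u.support.image (wtn p m j u) with hT
  have hTne : T.Nonempty := hsupp.image _
  set w := T.min' hTne with hw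
  set S := u.support.filter (fun i => wtn p m j u i = w) with hS
  have hSne : S.Nonempty := by
    obtain ⟨i, hi, hwi⟩ := Finset.mem_image.mp (T.min'_mem hTne)
    exact ⟨i, Finset.mem_filter.mpr ⟨hi, hwi⟩⟩
  set A := S.max' hSne with hA
  set B := S.min' hSne with hB
  have hmemA : A ∈ u.support ∧ wtn p m j u A = w := Finset.mem_filter.mp (S.max'_mem hSne)
  have hmemB : B ∈ u.support ∧ wtn p m j u B = w := Finset.mem_filter.mp (S.min'_mem hSne)
  have hAs : u.coeff A ≠ 0 := Polynomial.mem_support_iff.mp hmemA.1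
  have hBs : u.coeff B ≠ 0 := Polynomial.mem_support_iff.mp hmemB.1
  have hlb : ∀ i, (w : ℕ∞) ≤ Wt p m j u i := by
    intro i
    by_cases hc : u.coeff i = 0
    · rw [Wt_eq_top p m j hj hc]; exact le_top
    · rw [Wt_eq_wtn p m j hp hc]
      exact_mod_cast T.min'_le _ (Finset.mem_image_of_mem _ (Polynomial.mem_support_iff.mpr hc))
  have hstrict : ∀ i, u.coeff i ≠ 0 → wtn p m j u i ≠ w → (w : ℕ∞) < Wt p m j u i := by
    intro i hc hne
    rw [Wt_eq_wtn p m j hp hc]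
    have := T.min'_le _ (Finset.mem_image_of_mem _ (Polynomial.mem_support_iff.mpr hc))
    exact_mod_cast lt_of_le_of_ne this (Ne.symm hne)
  refine ⟨w, A, B, hAs, hBs, by rw [Wt_eq_wtn p m j hp hAs, hmemA.2],
    by rw [Wt_eq_wtn p m j hp hBs, hmemB.2], hlb, ?_, ?_⟩
  · intro i hi
    by_cases hc : u.coeff i = 0
    · rw [Wt_eq_top p m j hj hc]; exact_mod_cast ENat.coe_lt_top w
    · refine hstrict i hc (fun he => ?_)
      exact absurd (S.le_max' i (Finset.mem_filter.mpr ⟨Polynomial.mem_support_iff.mpr hc, he⟩)) (not_le.mpr hi)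
  · intro i hi
    by_cases hc : u.coeff i = 0
    · rw [Wt_eq_top p m j hj hc]; exact_mod_cast ENat.coe_lt_top w
    · refine hstrict i hc (fun he => ?_)
      exact absurd (S.min'_le i (Finset.mem_filter.mpr ⟨Polynomial.mem_support_iff.mpr hc, he⟩)) (not_le.mpr hi)

lemma le_V_sum (hp : p.Prime) {ι : Type} (s : Finset ι) (F : ι → ℤ) (c : ℕ∞)
    (h : ∀ i ∈ s, c ≤ V p (F i)) : c ≤ V p (∑ i ∈ s, F i) := by
  classical
  induction s using Finset.induction with
  | empty => simp [V_zero]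
  | @insert a s hx ih =>
    rw [Finset.sum_insert hx]
    refine le_trans (le_min (h a (Finset.mem_insert_self a s)) (ih fun i hi => h i (Finset.mem_insert_of_mem hi))) ?_
    exact min_le_emultiplicity_add

lemma weight_sum_le (hp : p.Prime) (hj : j ≠ 0) {ι : Type} (s : Finset ι) (F : ι → ℤ) (W C : ℕ∞)
    (h : ∀ t ∈ s, W ≤ (j : ℕ∞) * V p (F t) + C) :
    W ≤ (j : ℕ∞) * V p (∑ t ∈ s, F t) + C := by
  rcases s.eq_empty_or_nonempty with rfl | hs
  · simp [V_zero, ENat.mul_top (show (j:ℕ∞) ≠ 0 by exact_mod_cast hj)]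
  · obtain ⟨t₀, ht₀, hmin⟩ := s.exists_min_image (fun t => V p (F t)) hs
    calc W ≤ (j : ℕ∞) * V p (F t₀) + C := h t₀ ht₀
    _ ≤ _ := by
        gcongr
        exact le_V_sum p hp s F _ (fun i hi => hmin i hi)

lemma weight_sum_lt (hp : p.Prime) (hj : j ≠ 0) {ι : Type} (s : Finset ι) (F : ι → ℤ) (W C : ℕ∞)
    (hW : W ≠ ⊤)
    (h : ∀ t ∈ s, W < (j : ℕ∞) * V p (F t) + C) :
    W < (j : ℕ∞) * V p (∑ t ∈ s, F t) + C := by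
  rcases s.eq_empty_or_nonempty with rfl | hs
  · simp [V_zero, ENat.mul_top (show (j:ℕ∞) ≠ 0 by exact_mod_cast hj), lt_top_iff_ne_top, hW]
  · obtain ⟨t₀, ht₀, hmin⟩ := s.exists_min_image (fun t => V p (F t)) hs
    calc W < (j : ℕ∞) * V p (F t₀) + C := h t₀ ht₀
    _ ≤ _ := by
        gcongr
        exact le_V_sum p hp s F _ (fun i hi => hmin i hi)

lemma term_wt (hp : p.Prime) (g h : Polynomial ℤ) (a b : ℕ) :
    (j : ℕ∞) * V p (g.coeff a * h.coeff b) + (m : ℕ∞) * (↑a + ↑b) =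
      Wt p m j g a + Wt p m j h b := by
  rw [V_mul p hp, Wt, Wt]; ring

lemma Wt_mul_ge (hp : p.Prime) (hj : j ≠ 0) (g h : Polynomial ℤ) (i : ℕ) (W : ℕ∞)
    (hterm : ∀ a b : ℕ, a + b = i → W ≤ Wt p m j g a + Wt p m j h b) :
    W ≤ Wt p m j (g * h) i := by
  rw [Wt, Polynomial.coeff_mul]
  refine weight_sum_le p j hp hj _ _ W ((m : ℕ∞) * i) ?_
  rintro ⟨a, b⟩ hab
  have hab' : a + b = i := Finset.HasAntidiagonal.mem_antidiagonal.mp hab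
  have hcast : ((i : ℕ∞)) = (a : ℕ∞) + b := by exact_mod_cast hab'.symm
  simp only [hcast]
  rw [term_wt p m j hp g h a b]
  exact hterm a b hab'

lemma Wt_mul_gt (hp : p.Prime) (hj : j ≠ 0) (g h : Polynomial ℤ) (i : ℕ) (W : ℕ∞)
    (hW : W ≠ ⊤)
    (hterm : ∀ a b : ℕ, a + b = i → W < Wt p m j g a + Wt p m j h b) :
    W < Wt p m j (g * h) i := by
  rw [Wt, Polynomial.coeff_mul]
  refine weight_sum_lt p j hp hj _ _ W ((m : ℕ∞) * i) hW ?_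
  rintro ⟨a, b⟩ hab
  have hab' : a + b = i := Finset.HasAntidiagonal.mem_antidiagonal.mp hab
  have hcast : ((i : ℕ∞)) = (a : ℕ∞) + b := by exact_mod_cast hab'.symm
  simp only [hcast]
  rw [term_wt p m j hp g h a b]
  exact hterm a b hab'

lemma cancel_lt (C : ℕ∞) (hC : C ≠ ⊤) {x y : ℕ∞} (h : (j : ℕ∞) * x + C < (j : ℕ∞) * y + C) :
    x < y := by
  rw [ENat.add_lt_add_iff_right hC] at h
  exact lt_of_mul_lt_mul_left' h



lemma Wt_mul_eq (hp : p.Prime) (hj : j ≠ 0) (g h : Polynomial ℤ) (A B : ℕ) (wg wh : ℕ)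
    (hgA : Wt p m j g A = (wg : ℕ∞)) (hhB : Wt p m j h B = (wh : ℕ∞))
    (hstrict : ∀ a b : ℕ, a + b = A + B → (a, b) ≠ (A, B) →
      ((wg : ℕ∞) + wh) < Wt p m j g a + Wt p m j h b) :
    Wt p m j (g * h) (A + B) = ((wg : ℕ∞) + wh) := by
  classical
  have hjE : (j : ℕ∞) ≠ 0 := by exact_mod_cast hj
  have hCne : ((m : ℕ∞) * (↑A + ↑B)) ≠ ⊤ := by
    rw [show ((A : ℕ∞) + B) = ((A + B : ℕ) : ℕ∞) by push_cast; ring,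
      show ((m : ℕ∞) * ((A + B : ℕ) : ℕ∞)) = ((m * (A + B) : ℕ) : ℕ∞) by push_cast; ring]
    exact ENat.coe_ne_top _
  have hspecial : (j : ℕ∞) * V p (g.coeff A * h.coeff B) + (m : ℕ∞) * (↑A + ↑B)
      = (wg : ℕ∞) + wh := by
    rw [term_wt p m j hp, hgA, hhB]
  have hVfin : V p (g.coeff A * h.coeff B) ≠ ⊤ := by
    intro ht
    rw [ht, ENat.mul_top hjE, top_add] at hspecial
    have : ((wg:ℕ∞) + wh) ≠ ⊤ := by
      rw [show ((wg:ℕ∞) + wh) = ((wg + wh : ℕ) : ℕ∞) by push_cast; ring]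
      exact ENat.coe_ne_top _
    exact this hspecial.symm
  have hmem : (A, B) ∈ Finset.HasAntidiagonal.antidiagonal (A + B) := by
    rw [Finset.HasAntidiagonal.mem_antidiagonal]
  set s := (Finset.HasAntidiagonal.antidiagonal (A + B)).erase (A, B) with hs
  have hterm_gt : ∀ t ∈ s, V p (g.coeff A * h.coeff B) < V p (g.coeff t.1 * h.coeff t.2) := by
    rintro ⟨a, b⟩ hab
    have h1 := Finset.mem_erase.mp hab
    have hab' : a + b = A + B := Finset.HasAntidiagonal.mem_antidiagonal.mp h1.2
    have hlt := hstrict a b hab' h1.1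
    rw [← term_wt p m j hp g h a b] at hlt
    rw [← hspecial] at hlt
    have hAB : ((a : ℕ∞) + b) = ((A : ℕ∞) + B) := by exact_mod_cast hab'
    rw [hAB] at hlt
    exact cancel_lt j _ hCne hlt
  have hrest : V p (g.coeff A * h.coeff B) < V p (∑ t ∈ s, g.coeff t.1 * h.coeff t.2) := by
    rcases s.eq_empty_or_nonempty with he | hne
    · rw [he, Finset.sum_empty, V_zero]
      exact lt_top_iff_ne_top.mpr hVfin
    · obtain ⟨t₀, ht₀, hmin⟩ := s.exists_min_image (fun t => V p (g.coeff t.1 * h.coeff t.2)) hne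
      exact lt_of_lt_of_le (hterm_gt t₀ ht₀) (le_V_sum p hp s _ _ (fun i hi => hmin i hi))
  have hcoeff : (g * h).coeff (A + B)
      = g.coeff A * h.coeff B + ∑ t ∈ s, g.coeff t.1 * h.coeff t.2 := by
    rw [Polynomial.coeff_mul, ← Finset.add_sum_erase _ _ hmem]
  have hVc : V p ((g * h).coeff (A + B)) = V p (g.coeff A * h.coeff B) := by
    rw [hcoeff, add_comm]
    exact emultiplicity_add_of_gt hrest
  rw [Wt, hVc, show ((A + B : ℕ) : ℕ∞) = ((A : ℕ∞) + B) by push_cast; ring, hspecial]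

end Cor3

namespace Cor3

lemma key (p m j : ℕ) (hp : p.Prime) (hm : 1 ≤ m) (hj : 1 ≤ j) (hgcd : Nat.gcd m j = 1)
    (g h : Polynomial ℤ) (hg : g ≠ 0) (hh : h ≠ 0)
    (h0 : V p ((g * h).coeff 0) = (m : ℕ∞))
    (hjc : ¬ (p : ℤ) ∣ (g * h).coeff j)
    (hmid : ∀ i, 0 < i → i < j → (m : ℕ∞) ≤ V p ((g * h).coeff i)) :
    (V p (g.coeff 0) = (m : ℕ∞) ∧ V p (h.coeff 0) = 0 ∧ j ≤ g.natDegree) ∨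
    (V p (h.coeff 0) = (m : ℕ∞) ∧ V p (g.coeff 0) = 0 ∧ j ≤ h.natDegree) := by
  have hj0 : j ≠ 0 := by omega
  obtain ⟨wg, Ag, Bg, hgA0, hgB0, hgAeq, hgBeq, hglb, hgAs, hgBs⟩ := exists_AB p m j hp hj0 g hg
  obtain ⟨wh, Ah, Bh, hhA0, hhB0, hhAeq, hhBeq, hhlb, hhAs, hhBs⟩ := exists_AB p m j hp hj0 h hh
  have hWne : ((wg : ℕ∞) + wh) ≠ ⊤ := by
    rw [show ((wg : ℕ∞) + wh) = ((wg + wh : ℕ) : ℕ∞) by push_cast; ring]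
    exact ENat.coe_ne_top _
  -- strict per-pair bound
  have hpairA : ∀ a b : ℕ, Ag < a ∨ Ah < b →
      ((wg : ℕ∞) + wh) < Wt p m j g a + Wt p m j h b := by
    intro a b hab
    rcases hab with hlt | hlt
    · calc ((wg : ℕ∞) + wh) < Wt p m j g a + wh := by
            rw [ENat.add_lt_add_iff_right (ENat.coe_ne_top wh)]; exact hgAs a hlt
        _ ≤ _ := add_le_add_right (hhlb b) _
    · calc ((wg : ℕ∞) + wh) < (wg : ℕ∞) + Wt p m j h b := by
            rw [ENat.add_lt_add_iff_left (ENat.coe_ne_top wg)]; exact hhAs b hlt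
        _ ≤ _ := add_le_add_left (hglb a) _
  have hpairB : ∀ a b : ℕ, a < Bg ∨ b < Bh →
      ((wg : ℕ∞) + wh) < Wt p m j g a + Wt p m j h b := by
    intro a b hab
    rcases hab with hlt | hlt
    · calc ((wg : ℕ∞) + wh) < Wt p m j g a + wh := by
            rw [ENat.add_lt_add_iff_right (ENat.coe_ne_top wh)]; exact hgBs a hlt
        _ ≤ _ := add_le_add_right (hhlb b) _
    · calc ((wg : ℕ∞) + wh) < (wg : ℕ∞) + Wt p m j h b := by
            rw [ENat.add_lt_add_iff_left (ENat.coe_ne_top wg)]; exact hhBs b hlt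
        _ ≤ _ := add_le_add_left (hglb a) _
  -- global lower bound for product
  have hWlb : ∀ i, ((wg : ℕ∞) + wh) ≤ Wt p m j (g * h) i := by
    intro i
    exact Wt_mul_ge p m j hp hj0 g h i _ (fun a b _ => add_le_add (hglb a) (hhlb b))
  -- strict above Ag+Ah and below Bg+Bh
  have hfs_above : ∀ i, Ag + Ah < i → ((wg : ℕ∞) + wh) < Wt p m j (g * h) i := by
    intro i hi
    refine Wt_mul_gt p m j hp hj0 g h i _ hWne (fun a b hab => ?_)
    exact hpairA a b (by omega)
  have hfs_below : ∀ i, i < Bg + Bh → ((wg : ℕ∞) + wh) < Wt p m j (g * h) i := by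
    intro i hi
    refine Wt_mul_gt p m j hp hj0 g h i _ hWne (fun a b hab => ?_)
    exact hpairB a b (by omega)
  -- equality at Ag + Ah
  have hfeqA : Wt p m j (g * h) (Ag + Ah) = ((wg : ℕ∞) + wh) := by
    refine Wt_mul_eq p m j hp hj0 g h Ag Ah wg wh hgAeq hhAeq (fun a b hab hne => ?_)
    refine hpairA a b ?_
    rcases Nat.lt_or_ge a Ag with hA | hA
    · right; omega
    · rcases Nat.lt_or_ge Ag a with hA' | hA'
      · left; exact hA'
      · exfalso
        have ha : a = Ag := le_antisymm hA' hA
        have hb : b = Ah := by omega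
        exact hne (by rw [ha, hb])
  -- equality at Bg + Bh
  have hfeqB : Wt p m j (g * h) (Bg + Bh) = ((wg : ℕ∞) + wh) := by
    refine Wt_mul_eq p m j hp hj0 g h Bg Bh wg wh hgBeq hhBeq (fun a b hab hne => ?_)
    refine hpairB a b ?_
    rcases Nat.lt_or_ge a Bg with hA | hA
    · left; exact hA
    · rcases Nat.lt_or_ge b Bh with hB | hB
      · right; exact hB
      · exfalso
        have ha : a = Bg := by omega
        have hb : b = Bh := by omega
        exact hne (by rw [ha, hb])
  -- weight facts on f
  have hVfj : V p ((g * h).coeff j) = 0 := emultiplicity_eq_zero.mpr hjc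
  have hWfj : Wt p m j (g * h) j = ((j * m : ℕ) : ℕ∞) := by
    rw [Wt, hVfj, mul_zero, zero_add]; push_cast; ring
  have hWf0 : Wt p m j (g * h) 0 = ((j * m : ℕ) : ℕ∞) := by
    rw [Wt, h0]; push_cast; ring
  have hflb : ∀ i, ((j * m : ℕ) : ℕ∞) ≤ Wt p m j (g * h) i := by
    intro i
    rcases Nat.eq_zero_or_pos i with rfl | hi
    · rw [hWf0]
    · rcases Nat.lt_or_ge i j with hij | hij
      · rw [Wt]
        calc ((j * m : ℕ) : ℕ∞) = (j : ℕ∞) * m := by push_cast; ring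
          _ ≤ (j : ℕ∞) * V p ((g * h).coeff i) := mul_le_mul_right (hmid i hi hij) _
          _ ≤ _ := le_self_add
      · rw [Wt]
        have hnat : j * m ≤ m * i := by
          calc j * m = m * j := Nat.mul_comm _ _
            _ ≤ m * i := Nat.mul_le_mul_left m hij
        calc ((j * m : ℕ) : ℕ∞) ≤ ((m * i : ℕ) : ℕ∞) := by exact_mod_cast hnat
          _ = (m : ℕ∞) * i := by push_cast; ring
          _ ≤ _ := le_add_self
  have hfgt : ∀ i, j < i → ((j * m : ℕ) : ℕ∞) < Wt p m j (g * h) i := by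
    intro i hij
    rw [Wt]
    have hnat : j * m < m * i := by
      calc j * m = m * j := Nat.mul_comm _ _
        _ < m * i := by nlinarith
    calc ((j * m : ℕ) : ℕ∞) < ((m * i : ℕ) : ℕ∞) := by exact_mod_cast hnat
      _ = (m : ℕ∞) * i := by push_cast; ring
      _ ≤ _ := le_add_self
  -- W = j*m
  have hWeq : wg + wh = j * m := by
    have h1 : ((wg : ℕ∞) + wh) ≤ ((j * m : ℕ) : ℕ∞) := hWf0 ▸ hWlb 0
    have h2 : ((j * m : ℕ) : ℕ∞) ≤ ((wg : ℕ∞) + wh) := hfeqA ▸ hflb (Ag + Ah)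
    have h3 := le_antisymm h1 h2
    rw [show ((wg : ℕ∞) + wh) = ((wg + wh : ℕ) : ℕ∞) by push_cast; ring] at h3
    exact_mod_cast h3
  -- Ag + Ah = j
  have hAA : Ag + Ah = j := by
    have hle : Ag + Ah ≤ j := by
      by_contra hc
      push_neg at hc
      have h1 := hfgt (Ag + Ah) hc
      rw [hfeqA] at h1
      have h2 := hWf0 ▸ hWlb 0
      exact absurd (lt_of_le_of_lt h2 h1) (lt_irrefl _)
    have hge : j ≤ Ag + Ah := by
      by_contra hc
      push_neg at hc
      have h1 := hfs_above j hc
      rw [hWfj] at h1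
      have h2 := hfeqA ▸ hflb (Ag + Ah)
      exact absurd (lt_of_le_of_lt h2 h1) (lt_irrefl _)
    omega
  have hBB : Bg + Bh = 0 := by
    by_contra hc
    have h1 := hfs_below 0 (by omega)
    rw [hWf0] at h1
    have h2 := hfeqA ▸ hflb (Ag + Ah)
    exact absurd (lt_of_le_of_lt h2 h1) (lt_irrefl _)
  have hBg0 : Bg = 0 := by omega
  have hBh0 : Bh = 0 := by omega
  rw [hBg0] at hgBeq hgB0
  rw [hBh0] at hhBeq hhB0
  -- numeric equations
  have eg0 : j * padicValInt p (g.coeff 0) = wg := by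
    have h' := hgBeq
    rw [Wt_eq_wtn p m j hp hgB0] at h'
    have h'' : wtn p m j g 0 = wg := by exact_mod_cast h'
    simpa [wtn] using h''
  have eh0 : j * padicValInt p (h.coeff 0) = wh := by
    have h' := hhBeq
    rw [Wt_eq_wtn p m j hp hhB0] at h'
    have h'' : wtn p m j h 0 = wh := by exact_mod_cast h'
    simpa [wtn] using h''
  have egA : j * padicValInt p (g.coeff Ag) + m * Ag = wg := by
    have h' := hgAeq
    rw [Wt_eq_wtn p m j hp hgA0] at h'
    have h'' : wtn p m j g Ag = wg := by exact_mod_cast h'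
    simpa [wtn] using h''
  have ehA : j * padicValInt p (h.coeff Ah) + m * Ah = wh := by
    have h' := hhAeq
    rw [Wt_eq_wtn p m j hp hhA0] at h'
    have h'' : wtn p m j h Ah = wh := by exact_mod_cast h'
    simpa [wtn] using h''
  -- the sum of constant-term valuations is m
  have hsum : padicValInt p (g.coeff 0) + padicValInt p (h.coeff 0) = m := by
    have hmc : (g * h).coeff 0 = g.coeff 0 * h.coeff 0 := Polynomial.mul_coeff_zero g h
    have hV := h0
    rw [hmc, V_mul p hp, V_eq_padic p hp hgB0, V_eq_padic p hp hhB0] at hV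
    exact_mod_cast hV
  -- divisibility: j ∣ Ag and j ∣ Ah
  have hco : Nat.Coprime j m := Nat.coprime_comm.mp hgcd
  have hdvdAg : j ∣ Ag := by
    refine hco.dvd_of_dvd_mul_left ⟨padicValInt p (g.coeff 0) - padicValInt p (g.coeff Ag), ?_⟩
    rw [Nat.mul_sub]
    have h2 : j * padicValInt p (g.coeff 0) = m * Ag + j * padicValInt p (g.coeff Ag) := by
      rw [eg0, ← egA]; ring
    exact (Nat.sub_eq_of_eq_add h2).symm
  have hdvdAh : j ∣ Ah := by
    refine hco.dvd_of_dvd_mul_left ⟨padicValInt p (h.coeff 0) - padicValInt p (h.coeff Ah), ?_⟩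
    rw [Nat.mul_sub]
    have h2 : j * padicValInt p (h.coeff 0) = m * Ah + j * padicValInt p (h.coeff Ah) := by
      rw [eh0, ← ehA]; ring
    exact (Nat.sub_eq_of_eq_add h2).symm
  rcases Nat.eq_zero_or_pos Ag with hAg0 | hAgpos
  · -- Ag = 0, so Ah = j and h is the "big" factor
    have hAhj : Ah = j := by omega
    right
    have hvh : padicValInt p (h.coeff 0) = padicValInt p (h.coeff Ah) + m := by
      have h2 : j * (padicValInt p (h.coeff Ah) + m) = j * padicValInt p (h.coeff 0) := by
        rw [Nat.mul_add, eh0, ← ehA, hAhj]; ring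
      have h3 := Nat.eq_of_mul_eq_mul_left (show 0 < j by omega) h2
      omega
    have hvh0 : padicValInt p (h.coeff 0) = m := by omega
    have hvg0 : padicValInt p (g.coeff 0) = 0 := by omega
    refine ⟨by rw [V_eq_padic p hp hhB0, hvh0], by rw [V_eq_padic p hp hgB0, hvg0]; simp, ?_⟩
    have := Polynomial.le_natDegree_of_ne_zero hhA0
    omega
  · -- Ag = j, g is the "big" factor
    have hAgj : Ag = j := by
      have := Nat.le_of_dvd hAgpos hdvdAg
      omega
    left
    have hvg : padicValInt p (g.coeff 0) = padicValInt p (g.coeff Ag) + m := by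
      have h2 : j * (padicValInt p (g.coeff Ag) + m) = j * padicValInt p (g.coeff 0) := by
        rw [Nat.mul_add, eg0, ← egA, hAgj]; ring
      have h3 := Nat.eq_of_mul_eq_mul_left (show 0 < j by omega) h2
      omega
    have hvg0 : padicValInt p (g.coeff 0) = m := by omega
    have hvh0 : padicValInt p (h.coeff 0) = 0 := by omega
    refine ⟨by rw [V_eq_padic p hp hgB0, hvg0], by rw [V_eq_padic p hp hhB0, hvh0]; simp, ?_⟩
    have := Polynomial.le_natDegree_of_ne_zero hgA0
    omega

end Cor3

namespace Cor3

lemma one_le_multiset_prod (s : Multiset ℝ) (h : ∀ x ∈ s, (1:ℝ) ≤ x) : 1 ≤ s.prod := by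
  induction s using Multiset.induction with
  | empty => simp
  | cons a s ih =>
    rw [Multiset.prod_cons]
    have h1 : (1:ℝ) ≤ a := h a (Multiset.mem_cons_self a s)
    have h2 : (1:ℝ) ≤ s.prod := ih (fun x hx => h x (Multiset.mem_cons_of_mem hx))
    nlinarith

lemma no_such_factorization (p : ℕ) (hp : p.Prime) (f g h : Polynomial ℤ) (n j d : ℕ)
    (hf : f = g * h) (hn : f.natDegree = n) (hj1 : 1 ≤ j)
    (hg : g ≠ 0) (hh : h ≠ 0) (hdh : 1 ≤ h.natDegree) (hdg : j ≤ g.natDegree)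
    (hvg : (p : ℤ) ^ (padicValInt p (f.coeff 0)) ∣ g.coeff 0)
    (hvh : ¬ (p : ℤ) ∣ h.coeff 0)
    (hg0 : g.coeff 0 ≠ 0) (hh0 : h.coeff 0 ≠ 0)
    (hd : d = (f.coeff 0).natAbs / p ^ padicValInt p (f.coeff 0))
    (hmain : j = n ∨ ∀ θ : ℂ, Polynomial.aeval θ f = 0 → (d : ℝ) < ‖θ‖) :
    False := by
  rcases hmain with rfl | hroots
  · have hdeg : f.natDegree = g.natDegree + h.natDegree := by
      rw [hf, Polynomial.natDegree_mul hg hh]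
    omega
  · set m := padicValInt p (f.coeff 0) with hm
    have hf0 : f.coeff 0 = g.coeff 0 * h.coeff 0 := by rw [hf, Polynomial.mul_coeff_zero]
    obtain ⟨e, he⟩ := hvg
    have he0 : e ≠ 0 := by
      rintro rfl
      rw [mul_zero] at he
      exact hg0 he
    have hnat : (f.coeff 0).natAbs = p ^ m * (e.natAbs * (h.coeff 0).natAbs) := by
      rw [hf0, he, Int.natAbs_mul, Int.natAbs_mul, Int.natAbs_pow]
      simp [Int.natAbs_natCast]
      ring
    have hdval : d = e.natAbs * (h.coeff 0).natAbs := by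
      rw [hd, hnat, Nat.mul_div_cancel_left _ (pow_pos hp.pos m)]
    have hh0abs : 1 ≤ (h.coeff 0).natAbs := Nat.one_le_iff_ne_zero.mpr (Int.natAbs_ne_zero.mpr hh0)
    have he1 : 0 < e.natAbs := Nat.pos_of_ne_zero (Int.natAbs_ne_zero.mpr he0)
    have hhd : (h.coeff 0).natAbs ≤ d := by
      rw [hdval]; exact Nat.le_mul_of_pos_left _ he1
    have hd1 : 1 ≤ d := by
      rw [hdval]; exact Nat.one_le_iff_ne_zero.mpr (by positivity)
    -- complex side
    set H := h.map (Int.castRingHom ℂ) with hH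
    have hinj : Function.Injective ⇑(Int.castRingHom ℂ) := fun a b hab => by
      have : (a : ℂ) = (b : ℂ) := hab
      exact_mod_cast this
    have hHdeg : H.natDegree = h.natDegree := Polynomial.natDegree_map_eq_of_injective hinj h
    have hsplits : H.Splits := IsAlgClosed.splits H
    have hroots_card : Multiset.card H.roots = h.natDegree := by
      rw [← hHdeg]; exact Polynomial.splits_iff_card_roots.mp hsplits
    have hroot_f : ∀ a ∈ H.roots, (d:ℝ) < ‖a‖ := by
      intro a ha
      apply hroots a
      have hra : H.eval a = 0 := Polynomial.isRoot_of_mem_roots ha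
      have : Polynomial.aeval a f = Polynomial.eval a (f.map (Int.castRingHom ℂ)) := by
        rw [Polynomial.aeval_def, Polynomial.eval_map]
        rfl
      rw [this, hf, Polynomial.map_mul, Polynomial.eval_mul, ← hH, hra, mul_zero]
    have hHfact := Polynomial.Splits.eq_prod_roots hsplits
    have hev : H.coeff 0 = H.leadingCoeff * (H.roots.map (fun a => -a)).prod := by
      conv_lhs => rw [Polynomial.coeff_zero_eq_eval_zero, hHfact]
      rw [Polynomial.eval_mul, Polynomial.eval_C, Polynomial.eval_multiset_prod,
        Multiset.map_map]
      congr 1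
      congr 1
      ext a
      simp
    have habs : ‖H.coeff 0‖
        = ‖H.leadingCoeff‖ * ((H.roots.map (fun a => ‖-a‖)).prod) := by
      rw [hev, norm_mul]
      congr 1
      have := map_multiset_prod (normHom (α := ℂ)) (H.roots.map (fun a => -a))
      rw [Multiset.map_map] at this
      exact this
    -- lower bound the product of root absolute values
    have hcard1 : 0 < Multiset.card H.roots := by omega
    obtain ⟨a₀, ha₀⟩ := Multiset.card_pos_iff_exists_mem.mp hcard1
    obtain ⟨t, ht⟩ := Multiset.exists_cons_of_mem ha₀
    have hprod_gt : (d:ℝ) < (H.roots.map (fun a => ‖-a‖)).prod := by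
      rw [ht, Multiset.map_cons, Multiset.prod_cons]
      have h1 : (d:ℝ) < ‖-a₀‖ := by
        rw [norm_neg]; exact hroot_f a₀ ha₀
      have h2 : (1:ℝ) ≤ (t.map (fun a => ‖-a‖)).prod := by
        apply one_le_multiset_prod
        intro x hx
        obtain ⟨a, ha, rfl⟩ := Multiset.mem_map.mp hx
        have : a ∈ H.roots := by rw [ht]; exact Multiset.mem_cons_of_mem ha
        have := hroot_f a this
        rw [norm_neg]
        have : (1:ℝ) ≤ d := by exact_mod_cast hd1
        linarith
      calc (d:ℝ) < ‖-a₀‖ := h1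
        _ = ‖-a₀‖ * 1 := by ring
        _ ≤ _ := by
            apply mul_le_mul_of_nonneg_left h2 (norm_nonneg _)
    have hlc : (1:ℝ) ≤ ‖H.leadingCoeff‖ := by
      rw [hH, Polynomial.leadingCoeff_map_of_injective hinj]
      have hlc0 : h.leadingCoeff ≠ 0 := Polynomial.leadingCoeff_ne_zero.mpr hh
      have : (1:ℤ) ≤ |h.leadingCoeff| := Int.one_le_abs (by exact_mod_cast hlc0)
      have h2 : ‖(Int.castRingHom ℂ) h.leadingCoeff‖ = |(h.leadingCoeff : ℝ)| := by
        simpa using Complex.norm_intCast h.leadingCoeff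
      rw [h2]
      rw [← Int.cast_abs]
      exact_mod_cast this
    have hfinal : (d:ℝ) < ‖H.coeff 0‖ := by
      rw [habs]
      calc (d:ℝ) < (H.roots.map (fun a => ‖-a‖)).prod := hprod_gt
        _ ≤ _ := le_mul_of_one_le_left (Multiset.prod_nonneg (by
            intro x hx
            obtain ⟨a, ha, rfl⟩ := Multiset.mem_map.mp hx
            exact norm_nonneg _)) hlc
    have hup : ‖H.coeff 0‖ ≤ (d:ℝ) := by
      rw [hH, Polynomial.coeff_map]
      have : ‖(Int.castRingHom ℂ) (h.coeff 0)‖ = ((h.coeff 0).natAbs : ℝ) := by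
        simp [Complex.norm_intCast, Nat.cast_natAbs]
      rw [this]
      exact_mod_cast hhd
    linarith

end Cor3

namespace Cor3

lemma V_coe_ne_zero {p : ℕ} {z : ℤ} {k : ℕ} (h : V p z = (k : ℕ∞)) : z ≠ 0 := by
  rintro rfl
  rw [V_zero] at h
  exact (ENat.coe_ne_top k) h.symm

end Cor3

/-- Corollary 3 of the paper. -/
theorem irreducible_cor3 (p : ℕ) (hp : p.Prime) (f : Polynomial ℤ) (n : ℕ)
    (hn : f.natDegree = n) (hprim : f.IsPrimitive) (j : ℕ)
    (hj1 : 1 ≤ j) (hjn : j ≤ n)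
    (h1 : ¬ (p : ℤ) ∣ f.coeff j)
    (h2 : ∀ i, 1 ≤ i → i < j → f.coeff i ≠ 0 →
      padicValInt p (f.coeff 0) ≤ padicValInt p (f.coeff i))
    (h3 : Nat.gcd (padicValInt p (f.coeff 0)) j = 1)
    (d : ℕ) (hd : d = (f.coeff 0).natAbs / p ^ padicValInt p (f.coeff 0))
    (hmain : j = n ∨ ∀ θ : ℂ, Polynomial.aeval θ f = 0 → (d : ℝ) < ‖θ‖) :
    Irreducible f := by
  haveI : Fact p.Prime := ⟨hp⟩
  have hfne : f ≠ 0 := by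
    rintro rfl
    exact h1 (by simp)
  constructor
  · intro hu
    have := Polynomial.natDegree_eq_zero_of_isUnit hu
    omega
  · intro g h hf
    by_contra hcon
    push_neg at hcon
    obtain ⟨hgu, hhu⟩ := hcon
    have hg : g ≠ 0 := by rintro rfl; rw [zero_mul] at hf; exact hfne hf
    have hh : h ≠ 0 := by rintro rfl; rw [mul_zero] at hf; exact hfne hf
    have hdegg : 1 ≤ g.natDegree := by
      by_contra hc
      push_neg at hc
      obtain ⟨c, hcg⟩ := Polynomial.natDegree_eq_zero.mp (show g.natDegree = 0 by omega)
      have hdvd : Polynomial.C c ∣ f := ⟨h, by rw [hf, hcg]⟩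
      exact hgu (hcg ▸ Polynomial.isUnit_C.mpr (hprim c hdvd))
    have hdegh : 1 ≤ h.natDegree := by
      by_contra hc
      push_neg at hc
      obtain ⟨c, hcg⟩ := Polynomial.natDegree_eq_zero.mp (show h.natDegree = 0 by omega)
      have hdvd : Polynomial.C c ∣ f := ⟨g, by rw [hf, hcg, mul_comm]⟩
      exact hhu (hcg ▸ Polynomial.isUnit_C.mpr (hprim c hdvd))
    have hsum : n = g.natDegree + h.natDegree := by
      rw [← hn, hf, Polynomial.natDegree_mul hg hh]
    by_cases ha0 : f.coeff 0 = 0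
    · have hm0 : padicValInt p (f.coeff 0) = 0 := by rw [ha0]; exact padicValInt.zero
      have hj1' : j = 1 := by rw [hm0] at h3; simpa using h3
      rcases hmain with hjn' | hroots
      · omega
      · have hev : Polynomial.aeval (0:ℂ) f = 0 := by
          rw [Polynomial.aeval_def, Polynomial.eval₂_at_zero, ha0, map_zero]
        have hlt := hroots 0 hev
        rw [norm_zero] at hlt
        exact absurd hlt (not_lt.mpr (by positivity))
    · set m := padicValInt p (f.coeff 0) with hm
      have hVf0 : Cor3.V p (f.coeff 0) = (m : ℕ∞) := Cor3.V_eq_padic p hp ha0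
      have hf0c : f.coeff 0 = g.coeff 0 * h.coeff 0 := by
        rw [hf, Polynomial.mul_coeff_zero]
      by_cases hmz : m = 0
      · have hj1' : j = 1 := by rw [hmz] at h3; simpa using h3
        have hpnd : ¬ (p:ℤ) ∣ f.coeff 0 := by
          intro hdvd
          rcases (padicValInt_dvd_iff 1 (f.coeff 0)).mp (by simpa using hdvd) with hc | hc
          · exact ha0 hc
          · omega
        have hpg : ¬ (p:ℤ) ∣ g.coeff 0 := fun hdvd => hpnd (hf0c ▸ hdvd.mul_right _)
        have hph : ¬ (p:ℤ) ∣ h.coeff 0 := fun hdvd => hpnd (hf0c ▸ hdvd.mul_left _)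
        have hg00 : g.coeff 0 ≠ 0 := fun hz => hpg (hz ▸ dvd_zero _)
        have hh00 : h.coeff 0 ≠ 0 := fun hz => hph (hz ▸ dvd_zero _)
        refine Cor3.no_such_factorization p hp f g h n j d hf hn hj1 hg hh hdegh
          ?_ ?_ hph hg00 hh00 hd hmain
        · omega
        · rw [← hm, hmz, pow_zero]
          exact one_dvd _
      · have hmid : ∀ i, 0 < i → i < j → (m:ℕ∞) ≤ Cor3.V p ((g*h).coeff i) := by
          intro i hi hij
          rw [← hf]
          by_cases hci : f.coeff i = 0
          · rw [hci, Cor3.V_zero]; exact le_top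
          · rw [Cor3.V_eq_padic p hp hci]
            exact_mod_cast h2 i hi hij hci
        have hkey := Cor3.key p m j hp (Nat.one_le_iff_ne_zero.mpr hmz) hj1 h3 g h hg hh
          (by rw [← hf]; exact hVf0) (by rw [← hf]; exact h1) hmid
        rcases hkey with ⟨hVg, hVh, hdeg⟩ | ⟨hVh, hVg, hdeg⟩
        · refine Cor3.no_such_factorization p hp f g h n j d hf hn hj1 hg hh hdegh hdeg
            ?_ ?_ ?_ ?_ hd hmain
          · rw [pow_dvd_iff_le_emultiplicity]
            exact le_of_eq hVg.symm
          · exact emultiplicity_eq_zero.mp hVh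
          · exact Cor3.V_coe_ne_zero hVg
          · exact Cor3.V_coe_ne_zero (k := 0) (by exact_mod_cast hVh)
        · refine Cor3.no_such_factorization p hp f h g n j d (by rw [hf, mul_comm]) hn hj1 hh hg hdegg hdeg
            ?_ ?_ ?_ ?_ hd hmain
          · rw [pow_dvd_iff_le_emultiplicity]
            exact le_of_eq hVh.symm
          · exact emultiplicity_eq_zero.mp hVg
          · exact Cor3.V_coe_ne_zero hVh
          · exact Cor3.V_coe_ne_zero (k := 0) (by exact_mod_cast hVg)
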